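/- Let t ≤ (L/(L+1))(N-K) and let the error values e^(l)_{j_i} (i ∈ [t], l ∈ [L]) be i.i.d. standard Gaussian real random variables, and let α_{j_1},...,α_{j_t} be distinct nonzero reals. Then with probability 1 the stacked syndrome matrix S_L(t) has full column rank t; consequently the probability of failure of the collaborative Peterson / MSSR decoder is 0. -/

import Mathlib

open MeasureTheory ProbabilityTheory


lemma univ_poly_null (μ : Measure ℝ) [NullSingletonClass μ] (p : Polynomial ℝ) (hp : p ≠ 0) :
    μ {x | Polynomial.eval x p = 0} = 0 :=
  (Polynomial.finite_setOf_isRoot hp).measure_zero μ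

lemma mvpoly_null_fin : ∀ (n : ℕ) (μ : Measure ℝ), SigmaFinite μ → NullSingletonClass μ →
    ∀ (p : MvPolynomial (Fin n) ℝ), p ≠ 0 →
    Measure.pi (fun _ : Fin n => μ) {x | MvPolynomial.eval x p = 0} = 0 := by
  intro n
  induction n with
  | zero =>
    intro μ _ _ p hp
    obtain ⟨c, rfl⟩ := MvPolynomial.C_surjective (Fin 0) p
    have hc : c ≠ 0 := fun h => hp (by rw [h, map_zero])
    convert measure_empty (μ := Measure.pi (fun _ : Fin 0 => μ))
    ext x
    simp [hc]
  | succ n IH =>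
    intro μ hσ hna p hp
    haveI := hσ; haveI := hna
    set ν : Measure (Fin n → ℝ) := Measure.pi (fun _ : Fin n => μ) with hν
    set q : Polynomial (MvPolynomial (Fin n) ℝ) := MvPolynomial.finSuccEquiv ℝ n p with hq
    have hq0 : q ≠ 0 := by
      simp only [hq]
      intro h
      exact hp (by simpa using congrArg (MvPolynomial.finSuccEquiv ℝ n).symm h)
    have hc0 : q.leadingCoeff ≠ 0 := Polynomial.leadingCoeff_ne_zero.2 hq0
    have hSm : MeasurableSet {x : Fin (n+1) → ℝ | MvPolynomial.eval x p = 0} :=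
      (measurableSet_singleton (0:ℝ)).preimage (MvPolynomial.continuous_eval p).measurable
    set e := MeasurableEquiv.piFinSuccAbove (fun _ : Fin (n+1) => ℝ) 0 with he
    have hmp := measurePreserving_piFinSuccAbove (fun _ : Fin (n+1) => μ) 0
    set S := {x : Fin (n+1) → ℝ | MvPolynomial.eval x p = 0} with hS
    set T := e.symm ⁻¹' S with hT
    have hTm : MeasurableSet T := e.symm.measurable hSm
    have key : Measure.pi (fun _ : Fin (n+1) => μ) S = (μ.prod ν) T := by
      have h1 : e ⁻¹' T = S := by ext z; simp [hT]
      rw [← h1, ← Measure.map_apply e.measurable hTm, hmp.map_eq]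
    rw [key]
    have hsymm : ∀ (y : ℝ) (x : Fin n → ℝ), e.symm (y, x) = Fin.cons y x := by
      intro y x
      have h0 : e.symm (y, x) = Fin.insertNth 0 y x := rfl
      rw [h0]
      exact Fin.insertNth_zero' y x
    have hTslice : ∀ (y : ℝ) (x : Fin n → ℝ), ((y, x) ∈ T) ↔
        Polynomial.eval y (q.map (MvPolynomial.eval x)) = 0 := by
      intro y x
      simp only [hT, Set.mem_preimage, hsymm, hS, Set.mem_setOf_eq]
      rw [MvPolynomial.eval_eq_eval_mv_eval']
    rw [Measure.prod_apply_symm hTm]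
    have hIH : ν {x | MvPolynomial.eval x q.leadingCoeff = 0} = 0 := IH μ hσ hna _ hc0
    have hae : (fun x => μ ((fun y => (y, x)) ⁻¹' T)) =ᵐ[ν] 0 := by
      have hnm : ∀ᵐ x ∂ν, x ∉ {x | MvPolynomial.eval x q.leadingCoeff = 0} :=
        (measure_eq_zero_iff_ae_notMem).1 hIH
      filter_upwards [hnm] with x hx
      have hmap : q.map (MvPolynomial.eval x) ≠ 0 := by
        intro hz
        apply hx
        have h2 : (q.map (MvPolynomial.eval x)).coeff q.natDegree = 0 := by
          rw [hz, Polynomial.coeff_zero]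
        rw [Polynomial.coeff_map] at h2
        exact h2
      have hset : ((fun y => (y, x)) ⁻¹' T) =
          {y | Polynomial.eval y (q.map (MvPolynomial.eval x)) = 0} := by
        ext y
        simp only [Set.mem_preimage, Set.mem_setOf_eq]
        exact hTslice y x
      simp only [hset, Pi.zero_apply]
      exact univ_poly_null μ _ hmap
    rw [lintegral_congr_ae hae]
    simp

lemma mvpoly_null (ι : Type*) [Fintype ι] (μ : Measure ℝ) [SigmaFinite μ] [NullSingletonClass μ]
    (p : MvPolynomial ι ℝ) (hp : p ≠ 0) :
    Measure.pi (fun _ : ι => μ) {x | MvPolynomial.eval x p = 0} = 0 := by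
  classical
  set n := Fintype.card ι
  set f : Fin n ≃ ι := (Fintype.equivFin ι).symm with hf
  set E := MeasurableEquiv.piCongrLeft (fun _ : ι => ℝ) f with hE
  have hmp := measurePreserving_piCongrLeft (fun _ : ι => μ) f
  have hZm : MeasurableSet {x : ι → ℝ | MvPolynomial.eval x p = 0} :=
    (measurableSet_singleton (0:ℝ)).preimage (MvPolynomial.continuous_eval p).measurable
  have key := hmp.measure_preimage hZm.nullMeasurableSet
  have hEy : ∀ (y : Fin n → ℝ) (i : ι), E y i = y (f.symm i) := by
    intro y i
    conv_lhs => rw [← f.apply_symm_apply i]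
    rw [hE, MeasurableEquiv.coe_piCongrLeft]
    exact Equiv.piCongrLeft_apply_apply (P := fun _ : ι => ℝ) f y (f.symm i)
  have hpre : (⇑E ⁻¹' {x : ι → ℝ | MvPolynomial.eval x p = 0}) =
      {y : Fin n → ℝ | MvPolynomial.eval y (MvPolynomial.rename f.symm p) = 0} := by
    ext y
    simp only [Set.mem_preimage, Set.mem_setOf_eq, MvPolynomial.eval_rename]
    have : E y = fun i => y (f.symm i) := funext (hEy y)
    rw [this]
    rfl
  have hp' : MvPolynomial.rename f.symm p ≠ 0 := by
    intro h
    exact hp (MvPolynomial.rename_injective _ f.symm.injective (by rw [h, map_zero]))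
  rw [← key, hpre]
  exact mvpoly_null_fin n μ inferInstance inferInstance _ hp'

lemma uncurry_measurePreserving {L t : ℕ} (μ : Measure ℝ) [SigmaFinite μ] :
    MeasurePreserving (fun (e : Fin L → Fin t → ℝ) (p : Fin L × Fin t) => e p.1 p.2)
      (Measure.pi fun _ : Fin L => Measure.pi fun _ : Fin t => μ)
      (Measure.pi fun _ : Fin L × Fin t => μ) := by
  constructor
  · exact measurable_pi_lambda _ fun p => (measurable_pi_apply p.2).comp (measurable_pi_apply p.1)
  · refine (Measure.pi_eq fun s hs => ?_).symm
    rw [Measure.map_apply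
      (measurable_pi_lambda _ fun p => (measurable_pi_apply p.2).comp (measurable_pi_apply p.1))
      (MeasurableSet.univ_pi hs)]
    have hpre : ((fun (e : Fin L → Fin t → ℝ) (p : Fin L × Fin t) => e p.1 p.2) ⁻¹'
        Set.univ.pi s) = Set.univ.pi fun l => Set.univ.pi fun k => s (l, k) := by
      ext e
      simp only [Set.mem_preimage, Set.mem_pi, Set.mem_univ, true_implies, Prod.forall]
    rw [hpre, Measure.pi_pi]
    simp_rw [Measure.pi_pi]
    exact (Fintype.prod_prod_type (f := fun p : Fin L × Fin t => μ (s p))).symm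

lemma det_pow_succ {u : ℕ} (β : Fin u → ℝ) (hinj : Function.Injective β)
    (h0 : ∀ k, β k ≠ 0) :
    (Matrix.of fun i k : Fin u => β k ^ ((i : ℕ) + 1)).det ≠ 0 := by
  have hEq : (Matrix.of fun i k : Fin u => β k ^ ((i : ℕ) + 1)) =
      (Matrix.vandermonde β).transpose * Matrix.diagonal β := by
    ext i k
    simp [Matrix.mul_diagonal, Matrix.vandermonde, pow_succ]
  rw [hEq, Matrix.det_mul, Matrix.det_transpose, Matrix.det_diagonal]
  exact mul_ne_zero (Matrix.det_vandermonde_ne_zero_iff.2 hinj)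
    (Finset.prod_ne_zero_iff.2 fun k _ => h0 k)

lemma detW_ne_zero (m : ℕ) (hm : 0 < m) :
    ∀ t (β : Fin t → ℝ), Function.Injective β → (∀ k, β k ≠ 0) →
    (Matrix.of fun i k : Fin t =>
      if (k : ℕ) / m = (i : ℕ) / m then β k ^ ((i : ℕ) % m + 1) else 0).det ≠ 0 := by
  intro t
  induction t using Nat.strong_induction_on with
  | _ t IH =>
  intro β hinj h0
  by_cases hle : t ≤ m
  · have hEq : (Matrix.of fun i k : Fin t =>
        if (k : ℕ) / m = (i : ℕ) / m then β k ^ ((i : ℕ) % m + 1) else 0)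
        = Matrix.of fun i k : Fin t => β k ^ ((i : ℕ) + 1) := by
      ext i k
      rw [Matrix.of_apply, Matrix.of_apply,
        if_pos (by rw [Nat.div_eq_of_lt (lt_of_lt_of_le k.isLt hle),
          Nat.div_eq_of_lt (lt_of_lt_of_le i.isLt hle)]),
        Nat.mod_eq_of_lt (lt_of_lt_of_le i.isLt hle)]
    rw [hEq]
    exact det_pow_succ β hinj h0
  · push_neg at hle
    set s := t - m with hs
    have hts : m + s = t := by omega
    set E : Fin m ⊕ Fin s ≃ Fin t := finSumFinEquiv.trans (finCongr hts) with hEdef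
    have hEl : ∀ i : Fin m, ((E (Sum.inl i) : Fin t) : ℕ) = (i : ℕ) := by
      intro i; simp [hEdef]
    have hEr : ∀ j : Fin s, ((E (Sum.inr j) : Fin t) : ℕ) = m + (j : ℕ) := by
      intro j; simp [hEdef]
    set W := Matrix.of fun i k : Fin t =>
      if (k : ℕ) / m = (i : ℕ) / m then β k ^ ((i : ℕ) % m + 1) else 0 with hW
    set B := Matrix.of fun i k : Fin m => β (E (Sum.inl k)) ^ ((i : ℕ) + 1) with hB
    set W' := Matrix.of fun i k : Fin s =>
      if (k : ℕ) / m = (i : ℕ) / m then β (E (Sum.inr k)) ^ ((i : ℕ) % m + 1) else 0 with hW'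
    have hsub : W.submatrix E E = Matrix.fromBlocks B 0 0 W' := by
      ext i k
      rcases i with i | i <;> rcases k with k | k <;>
        simp only [Matrix.submatrix_apply, Matrix.fromBlocks_apply₁₁,
          Matrix.fromBlocks_apply₁₂, Matrix.fromBlocks_apply₂₁, Matrix.fromBlocks_apply₂₂,
          hW, hB, hW', Matrix.of_apply, Matrix.zero_apply, hEl, hEr]
      · rw [if_pos (by rw [Nat.div_eq_of_lt k.isLt, Nat.div_eq_of_lt i.isLt]),
          Nat.mod_eq_of_lt i.isLt]
      · rw [if_neg]
        intro h
        rw [Nat.div_eq_of_lt i.isLt, Nat.add_comm m (k : ℕ), Nat.add_div_right _ hm] at h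
        exact Nat.succ_ne_zero _ h
      · rw [if_neg]
        intro h
        rw [Nat.div_eq_of_lt k.isLt, Nat.add_comm m (i : ℕ), Nat.add_div_right _ hm] at h
        exact Nat.succ_ne_zero _ h.symm
      · rw [Nat.add_comm m (k : ℕ), Nat.add_comm m (i : ℕ), Nat.add_div_right _ hm,
          Nat.add_div_right _ hm, Nat.add_mod_right]
        simp only [Nat.succ_inj]
    have hdet : W.det = B.det * W'.det := by
      rw [← Matrix.det_submatrix_equiv_self E W, hsub, Matrix.det_fromBlocks_zero₂₁]
    rw [hdet]
    refine mul_ne_zero ?_ ?_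
    · exact det_pow_succ _ (hinj.comp (E.injective.comp Sum.inl_injective)) fun k => h0 _
    · exact IH s (by omega) _ (hinj.comp (E.injective.comp Sum.inr_injective)) fun k => h0 _

lemma rank_submatrix_rows_le {m n k : Type*} [Fintype m] [Fintype n] [Fintype k]
    (A : Matrix m n ℝ) (f : k → m) :
    (A.submatrix f (Equiv.refl n)).rank ≤ A.rank := by
  rw [Matrix.rank, Matrix.rank, Matrix.mulVecLin_submatrix f (Equiv.refl n) A]
  rw [LinearMap.range_comp]
  refine le_trans (Submodule.finrank_map_le _ _) ?_
  rw [LinearMap.range_comp]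
  have hid : LinearMap.funLeft ℝ ℝ ⇑(Equiv.refl n).symm = LinearMap.id := by
    ext v i; rfl
  rw [hid, LinearMap.range_id, Submodule.map_top]


/-- Under the Gaussian random error model, for t ≤ (L/(L+1))(N-K), the stacked syndrome
matrix S_L(t) = [H^(l) F^(l) D Y]_l has full column rank t with probability 1; hence the
probability of failure of the collaborative Peterson / MSSR decoder is 0. -/
theorem gaussian_stacked_syndrome_full_rank_as (N K L t : ℕ) (hK : K < N) (hL : 1 ≤ L)
    (ht : t * (L + 1) ≤ L * (N - K))
    (α : Fin t → ℝ) (hα : Function.Injective α) (hα0 : ∀ k, α k ≠ 0) :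
    Measure.pi (fun _ : Fin L => Measure.pi fun _ : Fin t => gaussianReal 0 1)
      {e : Fin L → Fin t → ℝ |
        (Matrix.of fun (p : Fin L × Fin (N - K - t)) (b : Fin t) =>
          ((Matrix.of fun (i : Fin (N - K - t)) (k : Fin t) => α k ^ (i : ℕ)) *
            Matrix.diagonal (e p.1) * Matrix.diagonal α *
            Matrix.of fun (i k : Fin t) => α i ^ (k : ℕ)) p.2 b).rank < t} = 0 := by
  classical
  haveI hNA : NullSingletonClass (gaussianReal (0 : ℝ) 1) :=
    ⟨fun x => gaussianReal_absolutelyContinuous 0 one_ne_zero (measure_singleton x)⟩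
  set m := N - K - t with hm_def
  have hD : 0 < N - K := Nat.sub_pos_of_lt hK
  have htD : t < N - K := by
    by_contra hcon
    push_neg at hcon
    have h1 : L * (N - K) ≤ L * t := Nat.mul_le_mul_left L hcon
    have h2 : t * (L + 1) ≤ L * t := le_trans ht h1
    have h3 : t * L = L * t := Nat.mul_comm t L
    have h4 : t * (L + 1) = t * L + t := by ring
    linarith
  have hm : 0 < m := by omega
  have hsplit : L * (N - K) = L * t + L * m := by
    rw [show N - K = t + m by omega, Nat.mul_add]
  have htLm : t ≤ L * m := by
    have h3 : t * L = L * t := Nat.mul_comm t L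
    have h4 : t * (L + 1) = t * L + t := by ring
    linarith
  -- the row-selection function
  set r : Fin t → Fin L × Fin m := fun i =>
    (⟨(i : ℕ) / m, Nat.div_lt_of_lt_mul (by rw [Nat.mul_comm]; exact lt_of_lt_of_le i.isLt htLm)⟩,
     ⟨(i : ℕ) % m, Nat.mod_lt _ hm⟩) with hr
  -- the full stacked matrix
  set Mfull : (Fin L → Fin t → ℝ) → Matrix (Fin L × Fin m) (Fin t) ℝ := fun e =>
    Matrix.of fun (p : Fin L × Fin m) (b : Fin t) =>
      ((Matrix.of fun (i : Fin m) (k : Fin t) => α k ^ (i : ℕ)) *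
        Matrix.diagonal (e p.1) * Matrix.diagonal α *
        Matrix.of fun (i k : Fin t) => α i ^ (k : ℕ)) p.2 b with hMfull
  have entry : ∀ (e : Fin L → Fin t → ℝ) (p : Fin L × Fin m) (b : Fin t),
      Mfull e p b = ∑ k : Fin t, α k ^ ((p.2 : ℕ)) * e p.1 k * α k * α k ^ (b : ℕ) := by
    intro e p b
    rw [hMfull]
    simp only [Matrix.of_apply]
    rw [Matrix.mul_apply]
    refine Finset.sum_congr rfl fun k _ => ?_
    rw [Matrix.mul_diagonal, Matrix.mul_diagonal]
    simp only [Matrix.of_apply]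
  -- the polynomial
  set Mp : Matrix (Fin t) (Fin t) (MvPolynomial (Fin L × Fin t) ℝ) :=
    Matrix.of fun i b : Fin t => ∑ k : Fin t,
      MvPolynomial.C (α k ^ ((i : ℕ) % m + (b : ℕ) + 1)) *
        MvPolynomial.X ((r i).1, k) with hMp
  set P : MvPolynomial (Fin L × Fin t) ℝ := Mp.det with hP
  have evalP : ∀ e : Fin L → Fin t → ℝ,
      MvPolynomial.eval (fun p : Fin L × Fin t => e p.1 p.2) P
        = ((Mfull e).submatrix r (Equiv.refl (Fin t))).det := by
    intro e
    rw [hP, RingHom.map_det]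
    congr 1
    ext i b
    simp only [RingHom.mapMatrix_apply, Matrix.map_apply, hMp, Matrix.of_apply, map_sum,
      Matrix.submatrix_apply, Equiv.refl_apply]
    rw [entry e (r i) b]
    refine Finset.sum_congr rfl fun k _ => ?_
    simp only [MvPolynomial.eval_mul, MvPolynomial.eval_C, MvPolynomial.eval_X]
    rw [pow_add, pow_add, pow_one]
    ring
  -- the witness
  set estar : Fin L → Fin t → ℝ := fun l k => if (k : ℕ) / m = (l : ℕ) then 1 else 0
    with hestar
  have hwitness : ((Mfull estar).submatrix r (Equiv.refl (Fin t))).det ≠ 0 := by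
    have hWV : (Mfull estar).submatrix r (Equiv.refl (Fin t)) =
        (Matrix.of fun i k : Fin t =>
          if (k : ℕ) / m = (i : ℕ) / m then α k ^ ((i : ℕ) % m + 1) else 0) *
          Matrix.vandermonde α := by
      ext i b
      rw [Matrix.submatrix_apply, Equiv.refl_apply, entry estar (r i) b, Matrix.mul_apply]
      refine Finset.sum_congr rfl fun k _ => ?_
      simp only [Matrix.of_apply, Matrix.vandermonde, hestar]
      split_ifs with hc
      · rw [pow_succ]; ring
      · ring
    rw [hWV, Matrix.det_mul]
    exact mul_ne_zero (detW_ne_zero m hm t α hα hα0)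
      (Matrix.det_vandermonde_ne_zero_iff.2 hα)
  have hP0 : P ≠ 0 := by
    intro h
    apply hwitness
    rw [← evalP estar, h, map_zero]
  -- the null set
  set Z : Set (Fin L × Fin t → ℝ) := {x | MvPolynomial.eval x P = 0} with hZ
  have hZm : MeasurableSet Z :=
    (measurableSet_singleton (0 : ℝ)).preimage (MvPolynomial.continuous_eval P).measurable
  have hZ0 : Measure.pi (fun _ : Fin L × Fin t => gaussianReal 0 1) Z = 0 :=
    mvpoly_null _ _ P hP0
  have hnull : Measure.pi (fun _ : Fin L => Measure.pi fun _ : Fin t => gaussianReal 0 1)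
      ((fun (e : Fin L → Fin t → ℝ) (p : Fin L × Fin t) => e p.1 p.2) ⁻¹' Z) = 0 := by
    rw [(uncurry_measurePreserving (gaussianReal 0 1)).measure_preimage
      hZm.nullMeasurableSet]
    exact hZ0
  have hsub : {e : Fin L → Fin t → ℝ | (Mfull e).rank < t} ⊆
      (fun (e : Fin L → Fin t → ℝ) (p : Fin L × Fin t) => e p.1 p.2) ⁻¹' Z := by
    intro e he
    simp only [Set.mem_setOf_eq] at he
    simp only [Set.mem_preimage, hZ, Set.mem_setOf_eq]
    rw [evalP e]
    by_contra hdet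
    have hunit : IsUnit ((Mfull e).submatrix r (Equiv.refl (Fin t))) :=
      (Matrix.isUnit_iff_isUnit_det _).2 (isUnit_iff_ne_zero.2 hdet)
    have hrank : ((Mfull e).submatrix r (Equiv.refl (Fin t))).rank = t := by
      rw [Matrix.rank_of_isUnit _ hunit, Fintype.card_fin]
    have hle := rank_submatrix_rows_le (Mfull e) r
    rw [hrank] at hle
    exact absurd (lt_of_le_of_lt hle he) (lt_irrefl t)
  exact measure_mono_null hsub hnull
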